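/- arXiv:1004.1320 — 6 statements merged into one kernel-verified Lean document; each statement's English description precedes it below -/
import Mathlib

section
/- Let X be a left module over the quaternion algebra ℍ (with standard generators 1, i, j, k), and define S(a,b) = (b^a, a_b) with a^b = j·a + (1+i)·b and a_b = −j·a + (1+i)·b. Then S satisfies the set-theoretic Yang–Baxter equation (S × id)(id × S)(S × id) = (id × S)(S × id)(id × S). -/
namespace BiquandlePaper

variable {X : Type*}

/-- `F × id` acting on triples. -/
def m1 (F : X × X → X × X) : X × X × X → X × X × X :=
  fun p => ((F (p.1, p.2.1)).1, (F (p.1, p.2.1)).2, p.2.2)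

/-- `id × F` acting on triples. -/
def m2 (F : X × X → X × X) : X × X × X → X × X × X :=
  fun p => (p.1, F p.2)

/-- The set-theoretic Yang-Baxter equation. -/
def YB (F : X × X → X × X) : Prop :=
  m1 F ∘ m2 F ∘ m1 F = m2 F ∘ m1 F ∘ m2 F

/-- The switch associated to up and down operations: `S (a, b) = (b ^ a, a _ b)`. -/
def sw (up down : X → X → X) : X × X → X × X :=
  fun p => (up p.2 p.1, down p.1 p.2)

/-- The twist map. -/
def tw : X × X → X × X := fun p => (p.2, p.1)

/-- Biquandle axiom B1. -/
def B1 (up down : X → X → X) : Prop :=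
  ∀ a : X, (∃! x : X, up a x = x ∧ down x a = a) ∧ (∃! y : X, down a y = y ∧ up y a = a)

/-- The quaternion `i`. -/
noncomputable def qi : Quaternion ℝ := ⟨0, 1, 0, 0⟩

/-- The quaternion `j`. -/
noncomputable def qj : Quaternion ℝ := ⟨0, 0, 1, 0⟩

/-- the Budapest biquandle `a^b = j a + (1+i) b`, `a_b = -j a + (1+i) b` on a
left module over the real quaternions satisfies the set-theoretic Yang-Baxter equation. -/
theorem budapest_biquandle_YB (X : Type*) [AddCommGroup X] [Module (Quaternion ℝ) X] :
    YB (sw (fun a b : X => qj • a + ((1 : Quaternion ℝ) + qi) • b)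
           (fun a b : X => (-qj) • a + ((1 : Quaternion ℝ) + qi) • b)) := by
  funext p
  obtain ⟨a, b, c⟩ := p
  simp only [YB, m1, m2, sw, Function.comp, smul_add, smul_smul, Prod.mk.injEq]
  set k : Quaternion ℝ := ⟨0,0,0,1⟩ with hk
  have s1 : qj * qj = -1 := by ext <;> simp [Quaternion.re_mul, Quaternion.imI_mul, Quaternion.imJ_mul, Quaternion.imK_mul, Quaternion.re_one,
      Quaternion.imI_one, Quaternion.imJ_one, Quaternion.imK_one] <;> simp [qi, qj]
  have s2 : (1 + qi) * (1 + qi) = qi + qi := by ext <;> simp [Quaternion.re_mul, Quaternion.imI_mul, Quaternion.imJ_mul, Quaternion.imK_mul, Quaternion.re_one,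
      Quaternion.imI_one, Quaternion.imJ_one, Quaternion.imK_one] <;> simp [qi, qj] <;> try ring
  have s3 : (1 + qi) * qj = qj + k := by ext <;> simp [Quaternion.re_mul, Quaternion.imI_mul, Quaternion.imJ_mul, Quaternion.imK_mul, Quaternion.re_one,
      Quaternion.imI_one, Quaternion.imJ_one, Quaternion.imK_one] <;> simp [qi, qj, hk] <;> try ring
  have s4 : (1 + qi) * -qj = -(qj + k) := by ext <;> simp [Quaternion.re_mul, Quaternion.imI_mul, Quaternion.imJ_mul, Quaternion.imK_mul, Quaternion.re_one,
      Quaternion.imI_one, Quaternion.imJ_one, Quaternion.imK_one] <;> simp [qi, qj, hk] <;> try ring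
  have s5 : qj * (1 + qi) = qj - k := by ext <;> simp [Quaternion.re_mul, Quaternion.imI_mul, Quaternion.imJ_mul, Quaternion.imK_mul, Quaternion.re_one,
      Quaternion.imI_one, Quaternion.imJ_one, Quaternion.imK_one] <;> simp [qi, qj, hk] <;> try ring
  have s6 : -qj * qj = 1 := by ext <;> simp [Quaternion.re_mul, Quaternion.imI_mul, Quaternion.imJ_mul, Quaternion.imK_mul, Quaternion.re_one,
      Quaternion.imI_one, Quaternion.imJ_one, Quaternion.imK_one] <;> simp [qi, qj]
  have s7 : -qj * (1 + qi) = k - qj := by ext <;> simp [Quaternion.re_mul, Quaternion.imI_mul, Quaternion.imJ_mul, Quaternion.imK_mul, Quaternion.re_one,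
      Quaternion.imI_one, Quaternion.imJ_one, Quaternion.imK_one] <;> simp [qi, qj, hk] <;> try ring
  have s8 : qj * -qj = 1 := by ext <;> simp [Quaternion.re_mul, Quaternion.imI_mul, Quaternion.imJ_mul, Quaternion.imK_mul, Quaternion.re_one,
      Quaternion.imI_one, Quaternion.imJ_one, Quaternion.imK_one] <;> simp [qi, qj]
  have s9 : -qj * -qj = -1 := by ext <;> simp [Quaternion.re_mul, Quaternion.imI_mul, Quaternion.imJ_mul, Quaternion.imK_mul, Quaternion.re_one,
      Quaternion.imI_one, Quaternion.imJ_one, Quaternion.imK_one] <;> simp [qi, qj]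
  have t1 : qj * (qi + qi) = -(k + k) := by ext <;> simp [Quaternion.re_mul, Quaternion.imI_mul, Quaternion.imJ_mul, Quaternion.imK_mul, Quaternion.re_one,
      Quaternion.imI_one, Quaternion.imJ_one, Quaternion.imK_one] <;> simp [qi, qj, hk] <;> try ring
  have t2 : qj * -(qj + k) = 1 - qi := by ext <;> simp [Quaternion.re_mul, Quaternion.imI_mul, Quaternion.imJ_mul, Quaternion.imK_mul, Quaternion.re_one,
      Quaternion.imI_one, Quaternion.imJ_one, Quaternion.imK_one] <;> simp [qi, qj, hk] <;> try ring
  have t3 : (1 + qi) * (qi + qi) = (qi - 1) + (qi - 1) := by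
    ext <;> simp [Quaternion.re_mul, Quaternion.imI_mul, Quaternion.imJ_mul, Quaternion.imK_mul, Quaternion.re_one,
      Quaternion.imI_one, Quaternion.imJ_one, Quaternion.imK_one] <;> simp [qi, qj, hk] <;> try ring
  have t4 : (1 + qi) * -(qj + k) = -(k + k) := by ext <;> simp [Quaternion.re_mul, Quaternion.imI_mul, Quaternion.imJ_mul, Quaternion.imK_mul, Quaternion.re_one,
      Quaternion.imI_one, Quaternion.imJ_one, Quaternion.imK_one] <;> simp [qi, qj, hk] <;> try ring
  have t5 : (1 + qi) * (qj + k) = k + k := by ext <;> simp [Quaternion.re_mul, Quaternion.imI_mul, Quaternion.imJ_mul, Quaternion.imK_mul, Quaternion.re_one,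
      Quaternion.imI_one, Quaternion.imJ_one, Quaternion.imK_one] <;> simp [qi, qj, hk] <;> try ring
  have t6 : -qj * (qj + k) = 1 - qi := by ext <;> simp [Quaternion.re_mul, Quaternion.imI_mul, Quaternion.imJ_mul, Quaternion.imK_mul, Quaternion.re_one,
      Quaternion.imI_one, Quaternion.imJ_one, Quaternion.imK_one] <;> simp [qi, qj, hk] <;> try ring
  have t7 : -qj * (qi + qi) = k + k := by ext <;> simp [Quaternion.re_mul, Quaternion.imI_mul, Quaternion.imJ_mul, Quaternion.imK_mul, Quaternion.re_one,
      Quaternion.imI_one, Quaternion.imJ_one, Quaternion.imK_one] <;> simp [qi, qj, hk] <;> try ring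
  refine ⟨?_, ?_, ?_⟩ <;>
    · simp only [s1, s2, s3, s4, s5, s6, s7, s8, s9, t1, t2, t3, t4, t5, t6, t7,
        add_smul, sub_smul, neg_smul, one_smul, neg_neg, smul_neg]
      abel
end BiquandlePaper
end

section
/- Let G be a group and define W : G × G → G × G by W(a,b) = (a²b, b⁻¹a⁻¹b). Then W is invertible and satisfies the set-theoretic Yang–Baxter equation (W × id)(id × W)(W × id) = (id × W)(W × id)(id × W). -/
namespace BiquandlePaper

variable {X : Type*}

/-- Wada's map `W (a, b) = (a² b, b⁻¹ a⁻¹ b)` on a group is invertible and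
satisfies the set-theoretic Yang-Baxter equation. -/
theorem wada_switch (G : Type*) [Group G] :
    Function.Bijective (fun p : G × G => (p.1 ^ 2 * p.2, p.2⁻¹ * p.1⁻¹ * p.2)) ∧
    YB (fun p : G × G => (p.1 ^ 2 * p.2, p.2⁻¹ * p.1⁻¹ * p.2)) := by
  constructor
  · apply Function.bijective_iff_has_inverse.mpr
    refine ⟨fun q => (q.1 * q.2⁻¹ * q.1⁻¹, q.1 * q.2 ^ 2), fun p => ?_, fun q => ?_⟩
    · ext <;> simp [sq, mul_assoc]
    · ext <;> simp [sq, mul_assoc]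
  · unfold YB m1 m2
    funext p
    obtain ⟨a, b, c⟩ := p
    ext <;> simp [sq, mul_assoc]
end BiquandlePaper
end

section
/- Let G be a group equipped with two commuting automorphisms x, y (an action of ℤ²), writing a·x and a·y for the images. Define S(a,b) = (b·y, (b·xy)⁻¹ (a·x) b). Then S is invertible and satisfies the set-theoretic Yang–Baxter equation (S × id)(id × S)(S × id) = (id × S)(S × id)(id × S). -/
namespace BiquandlePaper

variable {X : Type*}

/-- the Silver-Williams map `S (a, b) = (b·y, (b·xy)⁻¹ (a·x) b)` associated to a
pair of commuting automorphisms `x, y` of a group `G` is invertible and satisfies the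
set-theoretic Yang-Baxter equation. -/
theorem silver_williams_switch (G : Type*) [Group G] (x y : G ≃* G)
    (hcomm : ∀ a : G, x (y a) = y (x a)) :
    Function.Bijective (fun p : G × G => (y p.2, (y (x p.2))⁻¹ * x p.1 * p.2)) ∧
    YB (fun p : G × G => (y p.2, (y (x p.2))⁻¹ * x p.1 * p.2)) := by
  constructor
  · apply Function.bijective_iff_has_inverse.mpr
    refine ⟨fun q => (x.symm (x q.1 * q.2 * (y.symm q.1)⁻¹), y.symm q.1), ?_, ?_⟩
    · rintro ⟨a, b⟩
      simp [hcomm, mul_assoc]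
    · rintro ⟨c, d⟩
      simp [← hcomm, mul_assoc]
  · unfold YB m1 m2
    funext p
    obtain ⟨a, b, c⟩ := p
    simp only [Function.comp_apply]
    refine Prod.ext ?_ (Prod.ext ?_ ?_)
    · simp [hcomm]
    · simp [map_mul, map_inv, hcomm, mul_assoc]
    · simp [map_mul, map_inv, hcomm, mul_assoc]
end BiquandlePaper
end

section
/- Let S(a,b) = (b^a, a_b) be a biquandle on X and T the twist T(a,b) = (b,a). Then the first forbidden-move relation T₁S₂S₁ = S₂S₁T₂ holds on X³ if and only if for all a, b, c ∈ X: a_{b c} = a_{c b} (the down operation is commutative when iterated) and a^{b_c} = a^b (the up operation does not see down-modifications of the exponent). -/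
namespace BiquandlePaper

variable {X : Type*}

/-- for a biquandle `S` and the twist `T`, the first forbidden-move relation
`T₁S₂S₁ = S₂S₁T₂` holds iff `a_{bc} = a_{cb}` and `a^{b_c} = a^b` for all `a, b, c`. -/
theorem forbidden_move_iff (up down : X → X → X)
    (hup : ∀ b : X, Function.Bijective fun a => up a b)
    (hdown : ∀ b : X, Function.Bijective fun a => down a b)
    (hYB : YB (sw up down)) (hB1 : B1 up down) :
    (m1 (tw : X × X → X × X) ∘ m2 (sw up down) ∘ m1 (sw up down) =
        m2 (sw up down) ∘ m1 (sw up down) ∘ m2 tw) ↔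
      ((∀ a b c : X, down (down a b) c = down (down a c) b) ∧
       (∀ a b c : X, up a (down b c) = up a b)) := by
  constructor
  · intro h
    constructor
    · intro a b c
      exact congrArg (fun q => q.2.2) (congrFun h (a, b, c))
    · intro a b c
      exact congrArg (fun q => q.1) (congrFun h (b, c, a))
  · rintro ⟨h1, h2⟩
    funext p
    obtain ⟨a, b, c⟩ := p
    simp only [Function.comp_apply, m1, m2, sw, tw, Prod.mk.injEq]
    exact ⟨h2 c a b, (h2 b a c).symm, h1 a b c⟩
end BiquandlePaper
end

section
/- Let (S,T) be a virtual invariant pair on a finite set X with |X| = n, and let f_w be the permutation of Xⁿ (for the appropriate strand number) associated to a braid word w. If w and w' present the same welded link via a stabilization Markov move w' = wρ with ρ ∈ {σₙ, σₙ⁻¹, τₙ}, then there is a bijection between the fixed point sets Fix(f_w) ⊆ Xⁿ and Fix(f_{w'}) ⊆ X^{n+1}. -/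
namespace BiquandlePaper

variable {X : Type*}

/-- A letter of a virtual braid word: `Sum.inl i` is the virtual generator `τᵢ`, and
`Sum.inr (true, i)`, `Sum.inr (false, i)` are `σᵢ` and `σᵢ⁻¹` respectively
(0-based, acting on strands `i` and `i+1`). -/
def Letter : Type := ℕ ⊕ (Bool × ℕ)

/-- The index of the strands on which a letter acts. -/
def Letter.idx : Letter → ℕ := Sum.elim id Prod.snd

/-- Apply a map `F : X² → X²` to the coordinates `i, i+1` of a tuple in `Xⁿ`. -/
def applyPair (n : ℕ) (F : X × X → X × X) (i : ℕ) (g : Fin n → X) : Fin n → X :=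
  if h : i + 1 < n then
    fun k =>
      if (k : ℕ) = i then (F (g ⟨i, Nat.lt_of_succ_lt h⟩, g ⟨i + 1, h⟩)).1
      else if (k : ℕ) = i + 1 then (F (g ⟨i, Nat.lt_of_succ_lt h⟩, g ⟨i + 1, h⟩)).2
      else g k
  else g

/-- The action of a single letter on `Xⁿ`, where `σᵢ ↦ Sᵢ`, `σᵢ⁻¹ ↦ (S⁻¹)ᵢ`, `τᵢ ↦ Tᵢ`. -/
def step (n : ℕ) (S Sinv T : X × X → X × X) : Letter → (Fin n → X) → (Fin n → X)
  | Sum.inl i => applyPair n T i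
  | Sum.inr (true, i) => applyPair n S i
  | Sum.inr (false, i) => applyPair n Sinv i

/-- The map `f_{(S,T)} : Xⁿ → Xⁿ` associated to a braid word. -/
def evalWord (n : ℕ) (S Sinv T : X × X → X × X) (w : List Letter) (g : Fin n → X) :
    Fin n → X :=
  w.foldl (fun h l => step n S Sinv T l h) g


section StabilizationAux

/-- Extend a tuple by one coordinate at the end. -/
def extT (n : ℕ) (g : Fin n → X) (x : X) : Fin (n + 1) → X :=
  fun k => if h : (k : ℕ) < n then g ⟨k, h⟩ else x

lemma extT_lt (n : ℕ) (g : Fin n → X) (x : X) (k : Fin (n+1)) (h : (k : ℕ) < n) :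
    extT n g x k = g ⟨k, h⟩ := dif_pos h

lemma extT_ge (n : ℕ) (g : Fin n → X) (x : X) (k : Fin (n+1)) (h : ¬ (k : ℕ) < n) :
    extT n g x k = x := dif_neg h

lemma extT_inj (n : ℕ) (g g' : Fin n → X) (x x' : X)
    (h : extT n g x = extT n g' x') : g = g' ∧ x = x' := by
  constructor
  · funext j
    have := congrFun h ⟨j, Nat.lt_succ_of_lt j.2⟩
    rwa [extT_lt n g x _ j.2, extT_lt n g' x' _ j.2] at this
  · have := congrFun h ⟨n, Nat.lt_succ_self n⟩
    rwa [extT_ge n g x _ (lt_irrefl n), extT_ge n g' x' _ (lt_irrefl n)] at this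

lemma extT_eq_self (n : ℕ) (g : Fin (n+1) → X) :
    extT n (fun j => g ⟨j, Nat.lt_succ_of_lt j.2⟩) (g ⟨n, Nat.lt_succ_self n⟩) = g := by
  funext k
  by_cases h : (k : ℕ) < n
  · rw [extT_lt _ _ _ _ h]
  · rw [extT_ge _ _ _ _ h]
    have hk : (k : ℕ) = n := by have := k.2; omega
    congr 1
    exact Fin.ext hk.symm

lemma applyPair_ext (n : ℕ) (F : X × X → X × X) (i : ℕ) (hi : i + 1 < n)
    (g : Fin n → X) (x : X) :
    applyPair (n+1) F i (extT n g x) = extT n (applyPair n F i g) x := by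
  have hi1 : i + 1 < n + 1 := Nat.lt_succ_of_lt hi
  have e1 : extT n g x ⟨i, Nat.lt_of_succ_lt hi1⟩ = g ⟨i, Nat.lt_of_succ_lt hi⟩ :=
    extT_lt n g x _ (Nat.lt_of_succ_lt hi)
  have e2 : extT n g x ⟨i + 1, hi1⟩ = g ⟨i + 1, hi⟩ := extT_lt n g x _ hi
  funext k
  by_cases h : (k : ℕ) < n
  · rw [extT_lt n _ x k h]
    simp only [applyPair, dif_pos hi1, dif_pos hi, e1, e2]
    split_ifs <;> first | rfl | exact extT_lt n g x k h
  · have h1 : ¬ (k : ℕ) = i := by omega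
    have h2 : ¬ (k : ℕ) = i + 1 := by omega
    rw [extT_ge n _ x k h]
    simp only [applyPair, dif_pos hi1, if_neg h1, if_neg h2]
    exact extT_ge n g x k h

lemma step_ext (n : ℕ) (S Sinv T : X × X → X × X) (l : Letter)
    (hl : Letter.idx l + 2 ≤ n) (g : Fin n → X) (x : X) :
    step (n+1) S Sinv T l (extT n g x) = extT n (step n S Sinv T l g) x := by
  obtain i | ⟨b, i⟩ := l
  · exact applyPair_ext n T i (by simp [Letter.idx] at hl; omega) g x
  · cases b
    · exact applyPair_ext n Sinv i (by simp [Letter.idx] at hl; omega) g x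
    · exact applyPair_ext n S i (by simp [Letter.idx] at hl; omega) g x

lemma eval_ext (n : ℕ) (S Sinv T : X × X → X × X) (w : List Letter)
    (hw : ∀ l ∈ w, Letter.idx l + 2 ≤ n) (g : Fin n → X) (x : X) :
    evalWord (n+1) S Sinv T w (extT n g x) = extT n (evalWord n S Sinv T w g) x := by
  induction w generalizing g with
  | nil => rfl
  | cons l t ih =>
      have : evalWord (n+1) S Sinv T (l :: t) (extT n g x)
          = evalWord (n+1) S Sinv T t (step (n+1) S Sinv T l (extT n g x)) := rfl
      rw [this, step_ext n S Sinv T l (hw l List.mem_cons_self) g x]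
      exact ih (fun l' hl' => hw l' (List.mem_cons_of_mem l hl')) _

/-- Key finiteness lemma: if `a ↦ down a b` is bijective and the second half of B1 holds,
then any solution of `down a y = y` also satisfies `up y a = a`. -/
lemma lemA [Finite X] (up down : X → X → X)
    (hdown : ∀ b : X, Function.Bijective fun a => down a b)
    (hB1 : ∀ a : X, ∃! y : X, down a y = y ∧ up y a = a) :
    ∀ a y : X, down a y = y → up y a = a := by
  choose β hβ using fun a => (hB1 a).exists
  have hβinj : Function.Injective β := by
    intro a a' h
    apply (hdown (β a)).1
    show down a (β a) = down a' (β a)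
    rw [(hβ a).1, h, (hβ a').1]
  intro a y hy
  obtain ⟨a', rfl⟩ := Finite.surjective_of_injective hβinj y
  have haa : a = a' := by
    apply (hdown (β a')).1
    show down a (β a') = down a' (β a')
    rw [hy, (hβ a').1]
  rw [haa]
  exact (hβ a').2

lemma applyPair_mk (n : ℕ) (F : X × X → X × X) (i : ℕ) (hi : i + 1 < n)
    (g : Fin n → X) (j : ℕ) (hj : j < n) :
    applyPair n F i g ⟨j, hj⟩ =
      if j = i then (F (g ⟨i, Nat.lt_of_succ_lt hi⟩, g ⟨i + 1, hi⟩)).1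
      else if j = i + 1 then (F (g ⟨i, Nat.lt_of_succ_lt hi⟩, g ⟨i + 1, hi⟩)).2
      else g ⟨j, hj⟩ := by
  unfold applyPair
  rw [dif_pos hi]

lemma extT_mk_lt (n : ℕ) (g : Fin n → X) (x : X) (j : ℕ) (hj1 : j < n + 1) (hj : j < n) :
    extT n g x ⟨j, hj1⟩ = g ⟨j, hj⟩ := extT_lt n g x _ hj

lemma extT_mk_last (n : ℕ) (g : Fin n → X) (x : X) :
    extT n g x ⟨n, Nat.lt_succ_self n⟩ = x := extT_ge n g x _ (lt_irrefl n)

/-- The core bijection between fixed points of `f_w` and fixed points of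
`applyPair F (n-1) ∘ f_w` on one more strand, for any `F` whose row fixed points
are unique and rigid. -/
lemma core [Fintype X] (n : ℕ) (hn : 1 ≤ n)
    (S Sinv T F : X × X → X × X)
    (hF1 : ∀ a : X, ∃! y : X, F (a, y) = (a, y))
    (hF2 : ∀ a y c : X, F (a, y) = (c, y) → c = a)
    (w : List Letter) (hw : ∀ l ∈ w, Letter.idx l + 2 ≤ n) :
    Nonempty ({g : Fin n → X // evalWord n S Sinv T w g = g} ≃
      {g : Fin (n+1) → X // applyPair (n+1) F (n-1) (evalWord (n+1) S Sinv T w g) = g}) := by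
  have hii : (n - 1) + 1 = n := Nat.succ_pred_eq_of_pos hn
  set i := n - 1 with hidef
  have hiln : i < n := by omega
  have hin1 : i + 1 < n + 1 := by omega
  have hin1' : i < n + 1 := by omega
  -- the distinguished extension value
  let yf : (Fin n → X) → X := fun g => (hF1 (g ⟨i, hiln⟩)).choose
  have hyf : ∀ g : Fin n → X, F (g ⟨i, hiln⟩, yf g) = (g ⟨i, hiln⟩, yf g) :=
    fun g => (hF1 (g ⟨i, hiln⟩)).choose_spec.1
  have hyu : ∀ (g : Fin n → X) (z : X), F (g ⟨i, hiln⟩, z) = (g ⟨i, hiln⟩, z) → z = yf g :=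
    fun g z hz => (hF1 (g ⟨i, hiln⟩)).choose_spec.2 z hz
  have e1 : ∀ (g : Fin n → X) (x : X),
      extT n g x ⟨i, Nat.lt_of_succ_lt hin1⟩ = g ⟨i, hiln⟩ :=
    fun g x => extT_mk_lt n g x i _ hiln
  have e2 : ∀ (g : Fin n → X) (x : X), extT n g x ⟨i + 1, hin1⟩ = x := by
    intro g x
    have : (⟨i + 1, hin1⟩ : Fin (n + 1)) = ⟨n, Nat.lt_succ_self n⟩ := Fin.ext hii
    rw [this, extT_mk_last]
  -- a fixed extension is a fixed point
  have key : ∀ (g : Fin n → X) (x : X), F (g ⟨i, hiln⟩, x) = (g ⟨i, hiln⟩, x) →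
      applyPair (n+1) F i (extT n g x) = extT n g x := by
    intro g x hx
    funext k
    have hk : k = ⟨(k : ℕ), k.2⟩ := Fin.ext rfl
    rw [hk, applyPair_mk (n+1) F i hin1 _ _ k.2, e1, e2, hx]
    by_cases h1 : (k : ℕ) = i
    · rw [if_pos h1, extT_mk_lt n g x _ k.2 (by omega)]
      exact congrArg g (Fin.ext (by simpa using h1.symm))
    · by_cases h2 : (k : ℕ) = i + 1
      · rw [if_neg h1, if_pos h2]
        have : (⟨(k : ℕ), k.2⟩ : Fin (n+1)) = ⟨i + 1, hin1⟩ := Fin.ext (by simpa using h2)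
        rw [this, e2]
      · rw [if_neg h1, if_neg h2]
  refine ⟨Equiv.ofBijective (fun p => ⟨extT n p.1 (yf p.1), ?_⟩) ⟨?_, ?_⟩⟩
  · rw [eval_ext n S Sinv T w hw p.1 (yf p.1), p.2]
    exact key p.1 (yf p.1) (hyf p.1)
  · rintro ⟨g, hg⟩ ⟨g', hg'⟩ h
    have := extT_inj n g g' (yf g) (yf g') (congrArg Subtype.val h)
    exact Subtype.ext this.1
  · rintro ⟨g, hg⟩
    set g' : Fin n → X := fun j => g ⟨j, Nat.lt_succ_of_lt j.2⟩ with hg'def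
    set x : X := g ⟨n, Nat.lt_succ_self n⟩ with hxdef
    have hge : extT n g' x = g := extT_eq_self n g
    rw [← hge, eval_ext n S Sinv T w hw g' x] at hg
    set φ : Fin n → X := evalWord n S Sinv T w g' with hφdef
    -- coordinate i + 1 (= n)
    have hcn : (F (φ ⟨i, hiln⟩, x)).2 = x := by
      have h := congrFun hg ⟨i + 1, hin1⟩
      rw [applyPair_mk (n+1) F i hin1 _ _ hin1, if_neg (by omega), if_pos rfl,
        e1, e2, e2] at h
      exact h
    -- coordinate i
    have hci : (F (φ ⟨i, hiln⟩, x)).1 = g' ⟨i, hiln⟩ := by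
      have h := congrFun hg ⟨i, hin1'⟩
      rw [applyPair_mk (n+1) F i hin1 _ _ hin1', if_pos rfl, e1, e2,
        extT_mk_lt n g' x i hin1' hiln] at h
      exact h
    have hFeq : F (φ ⟨i, hiln⟩, x) = (g' ⟨i, hiln⟩, x) := Prod.ext hci hcn
    have hia : g' ⟨i, hiln⟩ = φ ⟨i, hiln⟩ := hF2 _ _ _ hFeq
    -- other coordinates
    have hφg : φ = g' := by
      funext j
      by_cases hj : (j : ℕ) = i
      · have : j = ⟨i, hiln⟩ := Fin.ext hj
        rw [this, ← hia]
      · have hjn : (j : ℕ) < n + 1 := Nat.lt_succ_of_lt j.2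
        have h := congrFun hg ⟨(j : ℕ), hjn⟩
        rw [applyPair_mk (n+1) F i hin1 _ _ hjn, if_neg hj, if_neg (by omega),
          extT_mk_lt n φ x _ hjn j.2, extT_mk_lt n g' x _ hjn j.2] at h
        have hjj : (⟨(j : ℕ), j.2⟩ : Fin n) = j := Fin.ext rfl
        rw [hjj] at h
        exact h
    rw [hφg] at hFeq
    refine ⟨⟨g', hφg⟩, ?_⟩
    apply Subtype.ext
    show extT n g' (yf g') = g
    rw [← hyu g' x hFeq, hge]

/-- Fixed pairs of a switch, from axiom B1. -/
lemma sw_hF1 (up down : X → X → X)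
    (hB12 : ∀ a : X, ∃! y : X, down a y = y ∧ up y a = a) :
    ∀ a : X, ∃! y : X, sw up down (a, y) = (a, y) := by
  intro a
  obtain ⟨y, ⟨h1, h2⟩, hu⟩ := hB12 a
  refine ⟨y, Prod.ext h2 h1, fun z hz => ?_⟩
  exact hu z ⟨congrArg Prod.snd hz, congrArg Prod.fst hz⟩

/-- Rigidity of row fixed points of a switch. -/
lemma sw_hF2 [Finite X] (up down : X → X → X)
    (hdown : ∀ b : X, Function.Bijective fun a => down a b)
    (hB12 : ∀ a : X, ∃! y : X, down a y = y ∧ up y a = a) :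
    ∀ a y c : X, sw up down (a, y) = (c, y) → c = a := by
  intro a y c h
  have h1 : up y a = c := congrArg Prod.fst h
  have h2 : down a y = y := congrArg Prod.snd h
  rw [← h1]
  exact lemA up down hdown hB12 a y h2

end StabilizationAux

/-- stabilization Markov move `w ↦ w ρ` with `ρ ∈ {σₙ, σₙ⁻¹, τₙ}` induces a
bijection between the fixed point sets of `f_w` on `Xⁿ` and of `f_{wρ}` on `X^{n+1}`. -/
theorem fixed_points_stabilization [Fintype X] (n : ℕ) (hn : 1 ≤ n)
    (up down tup tdown : X → X → X)
    (hup : ∀ b : X, Function.Bijective fun a => up a b)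
    (hdown : ∀ b : X, Function.Bijective fun a => down a b)
    (htup : ∀ b : X, Function.Bijective fun a => tup a b)
    (htdown : ∀ b : X, Function.Bijective fun a => tdown a b)
    (S Sinv T : X × X → X × X)
    (hS : S = sw up down) (hT : T = sw tup tdown)
    (hSinv : Sinv ∘ S = id) (hSinv' : S ∘ Sinv = id)
    (hTT : T ∘ T = id)
    (hB1S : B1 up down) (hB1T : B1 tup tdown)
    (hYB : YB S)
    (hvirt : m1 T ∘ m2 S ∘ m1 T = m2 T ∘ m1 S ∘ m2 T)
    (w : List Letter) (hw : ∀ l ∈ w, Letter.idx l + 2 ≤ n)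
    (ρ : Letter)
    (hρ : ρ = Sum.inl (n - 1) ∨ ρ = Sum.inr (true, n - 1) ∨ ρ = Sum.inr (false, n - 1)) :
    Nonempty
      ({g : Fin n → X // evalWord n S Sinv T w g = g} ≃
        {g : Fin (n + 1) → X // evalWord (n + 1) S Sinv T (w ++ [ρ]) g = g}) := by
  subst hS
  subst hT
  have hB1S2 : ∀ a : X, ∃! y : X, down a y = y ∧ up y a = a := fun a => (hB1S a).2
  have hB1T2 : ∀ a : X, ∃! y : X, tdown a y = y ∧ tup y a = a := fun a => (hB1T a).2
  have heval : ∀ g : Fin (n+1) → X,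
      evalWord (n+1) (sw up down) Sinv (sw tup tdown) (w ++ [ρ]) g
        = step (n+1) (sw up down) Sinv (sw tup tdown) ρ
            (evalWord (n+1) (sw up down) Sinv (sw tup tdown) w g) := by
    intro g
    simp [evalWord, List.foldl_append]
  have hiff : ∀ p : X × X, Sinv p = p ↔ sw up down p = p := by
    intro p
    constructor
    · intro h
      have h2 := congrFun hSinv' p
      simp only [Function.comp_apply, id_eq] at h2
      rw [h] at h2
      exact h2
    · intro h
      have h2 := congrFun hSinv p
      simp only [Function.comp_apply, id_eq] at h2
      rw [h] at h2
      exact h2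
  rcases hρ with hρ | hρ | hρ <;> subst hρ
  · obtain ⟨e⟩ := core n hn (sw up down) Sinv (sw tup tdown) (sw tup tdown)
      (sw_hF1 tup tdown hB1T2) (sw_hF2 tup tdown htdown hB1T2) w hw
    refine ⟨e.trans (Equiv.subtypeEquivRight fun g => ?_)⟩
    rw [heval g]
    exact Iff.rfl
  · obtain ⟨e⟩ := core n hn (sw up down) Sinv (sw tup tdown) (sw up down)
      (sw_hF1 up down hB1S2) (sw_hF2 up down hdown hB1S2) w hw
    refine ⟨e.trans (Equiv.subtypeEquivRight fun g => ?_)⟩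
    rw [heval g]
    exact Iff.rfl
  · have hF1inv : ∀ a : X, ∃! y : X, Sinv (a, y) = (a, y) := by
      intro a
      obtain ⟨y, hy, hu⟩ := sw_hF1 up down hB1S2 a
      exact ⟨y, (hiff _).2 hy, fun z hz => hu z ((hiff _).1 hz)⟩
    have hF2inv : ∀ a y c : X, Sinv (a, y) = (c, y) → c = a := by
      intro a y c h
      have h2 := congrFun hSinv' (a, y)
      simp only [Function.comp_apply, id_eq] at h2
      rw [h] at h2
      exact ((congrArg Prod.fst h2).symm.trans
        (lemA up down hdown hB1S2 c y (congrArg Prod.snd h2))).symm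
    obtain ⟨e⟩ := core n hn (sw up down) Sinv (sw tup tdown) Sinv hF1inv hF2inv w hw
    refine ⟨e.trans (Equiv.subtypeEquivRight fun g => ?_)⟩
    rw [heval g]
    exact Iff.rfl

end BiquandlePaper
end

section
/- Let S be a birack on X and σ a permutation of X. Define new operations a ∧ b = σ(σ⁻¹(a)^{σ⁻¹(b)}) and a ∨ b = σ(σ⁻¹(a)_{σ⁻¹(b)}). Then the resulting switch σ#(S)(a,b) = (b ∧ a, a ∨ b) also satisfies invertibility and the Yang–Baxter equation; and if S satisfies biquandle axiom B1 then so does σ#(S). -/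
namespace BiquandlePaper

variable {X : Type*}

/-- pushing a birack forward along a permutation `σ` of `X` via
`a ∧ b = σ(σ⁻¹(a)^{σ⁻¹(b)})`, `a ∨ b = σ(σ⁻¹(a)_{σ⁻¹(b)})` again yields a birack, and axiom
B1 is preserved. -/
theorem birack_pushforward (up down : X → X → X)
    (hup : ∀ b : X, Function.Bijective fun a => up a b)
    (hdown : ∀ b : X, Function.Bijective fun a => down a b)
    (hbij : Function.Bijective (sw up down))
    (hYB : YB (sw up down)) (σ : Equiv.Perm X) :
    Function.Bijective
      (sw (fun a b => σ (up (σ.symm a) (σ.symm b))) (fun a b => σ (down (σ.symm a) (σ.symm b)))) ∧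
    YB (sw (fun a b => σ (up (σ.symm a) (σ.symm b)))
           (fun a b => σ (down (σ.symm a) (σ.symm b)))) ∧
    (B1 up down →
      B1 (fun a b => σ (up (σ.symm a) (σ.symm b)))
         (fun a b => σ (down (σ.symm a) (σ.symm b)))) := by
  classical
  set S := sw up down with hS
  set S' := sw (fun a b => σ (up (σ.symm a) (σ.symm b)))
      (fun a b => σ (down (σ.symm a) (σ.symm b))) with hS'
  have key : S' = (Prod.map σ σ) ∘ S ∘ (Prod.map σ.symm σ.symm) := by
    funext p; simp [hS, hS', sw, Prod.map]
  refine ⟨?_, ?_, ?_⟩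
  · rw [key]
    have h1 : Function.Bijective (Prod.map (⇑σ) (⇑σ)) := (Equiv.prodCongr σ σ).bijective
    have h2 : Function.Bijective (Prod.map (⇑σ.symm) (⇑σ.symm)) :=
      (Equiv.prodCongr σ.symm σ.symm).bijective
    exact h1.comp (hbij.comp h2)
  · set M : X × X × X → X × X × X := fun p => (σ p.1, σ p.2.1, σ p.2.2) with hM
    set N : X × X × X → X × X × X := fun p => (σ.symm p.1, σ.symm p.2.1, σ.symm p.2.2) with hN
    have hm1 : m1 S' = M ∘ m1 S ∘ N := by
      funext p; simp [m1, key, hM, hN, Prod.map]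
    have hm2 : m2 S' = M ∘ m2 S ∘ N := by
      funext p; simp [m2, key, hM, hN, Prod.map]
    have hNM : N ∘ M = id := by funext p; simp [hM, hN]
    unfold YB
    rw [hm1, hm2]
    have lhs : (M ∘ m1 S ∘ N) ∘ (M ∘ m2 S ∘ N) ∘ (M ∘ m1 S ∘ N)
        = M ∘ (m1 S ∘ m2 S ∘ m1 S) ∘ N := by
      funext p
      simp only [Function.comp_apply]
      rw [show ∀ q, N (M q) = q from fun q => congrFun hNM q,
          show ∀ q, N (M q) = q from fun q => congrFun hNM q]
    have rhs : (M ∘ m2 S ∘ N) ∘ (M ∘ m1 S ∘ N) ∘ (M ∘ m2 S ∘ N)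
        = M ∘ (m2 S ∘ m1 S ∘ m2 S) ∘ N := by
      funext p
      simp only [Function.comp_apply]
      rw [show ∀ q, N (M q) = q from fun q => congrFun hNM q,
          show ∀ q, N (M q) = q from fun q => congrFun hNM q]
    rw [lhs, rhs, hYB]
  · intro h a
    constructor
    · obtain ⟨x, ⟨hx1, hx2⟩, hxu⟩ := (h (σ.symm a)).1
      refine ⟨σ x, ⟨by simp [hx1], by simp [hx2]⟩, ?_⟩
      intro y ⟨hy1, hy2⟩
      have h1 : up (σ.symm a) (σ.symm y) = σ.symm y := by
        have := congrArg σ.symm hy1; simpa using this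
      have h2 : down (σ.symm y) (σ.symm a) = σ.symm a := by
        have := congrArg σ.symm hy2; simpa using this
      have := hxu (σ.symm y) ⟨h1, h2⟩
      have := congrArg σ this; simpa using this
    · obtain ⟨x, ⟨hx1, hx2⟩, hxu⟩ := (h (σ.symm a)).2
      refine ⟨σ x, ⟨by simp [hx1], by simp [hx2]⟩, ?_⟩
      intro y ⟨hy1, hy2⟩
      have h1 : down (σ.symm a) (σ.symm y) = σ.symm y := by
        have := congrArg σ.symm hy1; simpa using this
      have h2 : up (σ.symm y) (σ.symm a) = σ.symm a := by
        have := congrArg σ.symm hy2; simpa using this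
      have := hxu (σ.symm y) ⟨h1, h2⟩
      have := congrArg σ this; simpa using this
end BiquandlePaper
end
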